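/- For a bounded self-adjoint operator T with 0 ≤ T ≤ I on a complex Hilbert space and any vector e in the closure of the range of T, the sequence ∑_{k=0}^{N} (I-T)^k T e converges in norm to e - P e = e as N → ∞ (where P is the projection onto ker T, so P e = 0). -/

import Mathlib

open scoped InnerProductSpace
open Filter

section Aux
variable {H : Type*} [NormedAddCommGroup H] [InnerProductSpace ℂ H]

/-- Cauchy–Schwarz-ish trick: for a symmetric operator whose quadratic form lies
between `0` and `‖·‖²`, we have `‖A z‖² ≤ re ⟪A z, z⟫`. -/
lemma aux_sq_le (A : H →L[ℂ] H) (hA : ∀ x y : H, ⟪A x, y⟫_ℂ = ⟪x, A y⟫_ℂ)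
    (h0 : ∀ x : H, 0 ≤ (⟪A x, x⟫_ℂ).re)
    (h1 : ∀ x : H, (⟪A x, x⟫_ℂ).re ≤ ‖x‖ ^ 2) (z : H) :
    ‖A z‖ ^ 2 ≤ (⟪A z, z⟫_ℂ).re := by
  have h := h0 (z - A z)
  have e1 : ⟪A (A z), z⟫_ℂ = ⟪A z, A z⟫_ℂ := hA (A z) z
  have e2 : (⟪A z, A z⟫_ℂ).re = ‖A z‖ ^ 2 := by
    rw [← inner_self_eq_norm_sq (𝕜 := ℂ) (A z)]; rfl
  have e3 : (⟪A (A z), A z⟫_ℂ).re ≤ ‖A z‖ ^ 2 := h1 (A z)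
  have expand : (⟪A (z - A z), z - A z⟫_ℂ).re
      = (⟪A z, z⟫_ℂ).re - 2 * ‖A z‖ ^ 2 + (⟪A (A z), A z⟫_ℂ).re := by
    rw [map_sub]
    simp only [inner_sub_left, inner_sub_right, e1]
    simp [Complex.sub_re, Complex.add_re, e2]
    rw [← Complex.ofReal_pow, Complex.ofReal_re]
    ring
  nlinarith [h, expand, e3]

end Aux

/-- Neumann-series-type convergence: for `e` in the closure of the range of `T`
(so that `P e = 0` for the orthogonal projection `P` onto `ker T`), the partial
sums `∑_{k=0}^{N} (I-T)^k T e` converge in norm to `e - P e = e`. -/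
theorem unfolding_neumann_tendsto
    {H : Type*} [NormedAddCommGroup H] [InnerProductSpace ℂ H] [CompleteSpace H]
    (T : H →L[ℂ] H) (hT : IsSelfAdjoint T)
    (hpos : ∀ x : H, 0 ≤ (⟪T x, x⟫_ℂ).re)
    (hle : ∀ x : H, (⟪T x, x⟫_ℂ).re ≤ ‖x‖ ^ 2)
    (P : H →L[ℂ] H)
    (hPmem : ∀ x : H, P x ∈ LinearMap.ker (T : H →ₗ[ℂ] H))
    (hPorth : ∀ x : H, x - P x ∈ (LinearMap.ker (T : H →ₗ[ℂ] H))ᗮ)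
    (e : H) (he : e ∈ (LinearMap.range (T : H →ₗ[ℂ] H)).topologicalClosure) :
    P e = 0 ∧
      Tendsto (fun N : ℕ => ∑ k ∈ Finset.range (N + 1), ((1 - T) ^ k) (T e))
        atTop (nhds (e - P e)) := by
  have hTsymm : ∀ x y : H, ⟪T x, y⟫_ℂ = ⟪x, T y⟫_ℂ :=
    fun x y => (hT.isSymmetric) x y
  set S : H →L[ℂ] H := 1 - T with hS
  have hSsa : IsSelfAdjoint S := (IsSelfAdjoint.one (H →L[ℂ] H)).sub hT
  have hSsymm : ∀ x y : H, ⟪S x, y⟫_ℂ = ⟪x, S y⟫_ℂ :=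
    fun x y => (hSsa.isSymmetric) x y
  have hSpow_symm : ∀ (n : ℕ) (x y : H), ⟪(S ^ n) x, y⟫_ℂ = ⟪x, (S ^ n) y⟫_ℂ :=
    fun n x y => ((hSsa.pow n).isSymmetric) x y
  have hnorm_sq : ∀ x : H, (⟪x, x⟫_ℂ).re = ‖x‖ ^ 2 := by
    intro x; rw [← inner_self_eq_norm_sq (𝕜 := ℂ) x]; rfl
  have hSapp : ∀ x : H, S x = x - T x := by intro x; simp [hS]
  have hSpos : ∀ x : H, 0 ≤ (⟪S x, x⟫_ℂ).re := by
    intro x; rw [hSapp, inner_sub_left, Complex.sub_re, hnorm_sq]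
    linarith [hle x]
  have hSle : ∀ x : H, (⟪S x, x⟫_ℂ).re ≤ ‖x‖ ^ 2 := by
    intro x; rw [hSapp, inner_sub_left, Complex.sub_re, hnorm_sq]
    linarith [hpos x]
  have hTkey : ∀ z : H, ‖T z‖ ^ 2 ≤ (⟪T z, z⟫_ℂ).re := aux_sq_le T hTsymm hpos hle
  have hSkey : ∀ z : H, ‖S z‖ ^ 2 ≤ (⟪S z, z⟫_ℂ).re := aux_sq_le S hSsymm hSpos hSle
  have hScontr : ∀ z : H, ‖S z‖ ≤ ‖z‖ := by
    intro z
    have h1 : ‖S z‖ ^ 2 ≤ ‖z‖ ^ 2 := le_trans (hSkey z) (hSle z)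
    nlinarith [norm_nonneg (S z), norm_nonneg z]
  have hSpow_contr : ∀ (n : ℕ) (z : H), ‖(S ^ n) z‖ ≤ ‖z‖ := by
    intro n
    induction n with
    | zero => intro z; simp
    | succ n ih =>
      intro z
      have hz : (S ^ (n + 1)) z = (S ^ n) (S z) := by rw [pow_succ]; rfl
      rw [hz]
      exact le_trans (ih (S z)) (hScontr z)
  have hcommST : S * T = T * S := (((Commute.one_left T).sub_left (Commute.refl T))).eq
  have hcomm : ∀ n : ℕ, (S ^ n) * T = T * (S ^ n) := fun n =>
    (((Commute.one_left T).sub_left (Commute.refl T)).pow_left n).eq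
  have hcomm' : ∀ (n : ℕ) (x : H), (S ^ n) (T x) = T ((S ^ n) x) := by
    intro n x
    have := congrArg (fun A : H →L[ℂ] H => A x) (hcomm n)
    simpa using this
  -- Part 1 : P e = 0
  have he_orth : e ∈ (LinearMap.ker (T : H →ₗ[ℂ] H))ᗮ := by
    have hsub : (LinearMap.range (T : H →ₗ[ℂ] H)).topologicalClosure ≤ (LinearMap.ker (T : H →ₗ[ℂ] H))ᗮ := by
      apply Submodule.topologicalClosure_minimal
      · intro y hy
        obtain ⟨x, rfl⟩ := hy
        rw [Submodule.mem_orthogonal]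
        intro u hu
        rw [ContinuousLinearMap.coe_coe, ← hTsymm]
        rw [LinearMap.mem_ker] at hu
        rw [show T u = 0 from hu, inner_zero_left]
      · exact Submodule.isClosed_orthogonal _
    exact hsub he
  have hPe : P e = 0 := by
    have h1 : P e ∈ (LinearMap.ker (T : H →ₗ[ℂ] H))ᗮ := by
      have h2 : P e = e - (e - P e) := by abel
      rw [h2]
      exact Submodule.sub_mem _ he_orth (hPorth e)
    have h2 : ⟪P e, P e⟫_ℂ = 0 := by
      rw [Submodule.mem_orthogonal] at h1
      exact h1 (P e) (hPmem e)
    exact inner_self_eq_zero.mp h2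
  refine ⟨hPe, ?_⟩
  -- telescoping
  have telescope : ∀ N : ℕ,
      (∑ k ∈ Finset.range (N + 1), ((1 - T) ^ k) (T e)) = e - (S ^ (N + 1)) e := by
    intro N
    have halg : (∑ k ∈ Finset.range (N + 1), S ^ k) * (S - 1) = S ^ (N + 1) - 1 :=
      geom_sum_mul S (N + 1)
    have halg2 : (∑ k ∈ Finset.range (N + 1), S ^ k) * T = 1 - S ^ (N + 1) := by
      have hst : (S - 1 : H →L[ℂ] H) = -T := by rw [hS]; abel
      rw [hst] at halg
      have h2 := congrArg Neg.neg halg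
      simpa [mul_neg, neg_sub] using h2
    have happ := congrArg (fun A : H →L[ℂ] H => A e) halg2
    simp only [ContinuousLinearMap.mul_apply, ContinuousLinearMap.sub_apply,
      ContinuousLinearMap.one_apply, ContinuousLinearMap.sum_apply] at happ
    rw [← hS]
    exact happ
  -- convergence to 0 of S^n on the range of T
  have hrange : ∀ x : H, Tendsto (fun n : ℕ => (S ^ n) (T x)) atTop (nhds 0) := by
    intro x
    set d : ℕ → ℝ := fun m => (⟪(S ^ m) x, x⟫_ℂ).re with hd
    have hdiff : ∀ m : ℕ, d m - d (m + 1) = (⟪(S ^ m) (T x), x⟫_ℂ).re := by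
      intro m
      have hsub : (S ^ m) x - (S ^ (m + 1)) x = (S ^ m) (T x) := by
        rw [pow_succ]
        rw [show ((S ^ m * S) : H →L[ℂ] H) x = (S ^ m) (S x) from rfl, ← map_sub]
        congr 1
        rw [hSapp]; abel
      simp only [hd, ← hsub, inner_sub_left, Complex.sub_re]
    have heven : ∀ j : ℕ, (⟪(S ^ (j + j)) (T x), x⟫_ℂ).re
        = (⟪T ((S ^ j) x), (S ^ j) x⟫_ℂ).re := by
      intro j
      rw [pow_add]
      rw [show ((S ^ j * S ^ j) : H →L[ℂ] H) (T x) = (S ^ j) ((S ^ j) (T x)) from rfl]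
      rw [hSpow_symm j, hcomm' j]
    have hodd : ∀ j : ℕ, (⟪(S ^ (j + j + 1)) (T x), x⟫_ℂ).re
        = (⟪S (T ((S ^ j) x)), (S ^ j) x⟫_ℂ).re := by
      intro j
      rw [pow_succ, pow_add]
      rw [show ((S ^ j * S ^ j * S) : H →L[ℂ] H) (T x) = (S ^ j) ((S ^ j) (S (T x))) from rfl]
      rw [hSpow_symm j]
      have hc : (S ^ j) (S (T x)) = S ((S ^ j) (T x)) := by
        have := congrArg (fun A : H →L[ℂ] H => A (T x)) ((Commute.refl S).pow_left j).eq
        simpa using this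
      rw [hc, hcomm' j x]
    have hST : ∀ z : H, 0 ≤ (⟪S (T z), z⟫_ℂ).re := by
      intro z
      have h1 : S (T z) = T z - T (T z) := hSapp (T z)
      have h2 : (⟪T (T z), z⟫_ℂ).re = ‖T z‖ ^ 2 := by
        rw [hTsymm (T z) z, hnorm_sq]
      rw [h1, inner_sub_left, Complex.sub_re, h2]
      linarith [hTkey z]
    have hd_anti : ∀ m : ℕ, d (m + 1) ≤ d m := by
      intro m
      rcases Nat.even_or_odd m with ⟨j, hj⟩ | ⟨j, hj⟩
      · have := heven j
        rw [← hj] at this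
        linarith [hpos ((S ^ j) x), hdiff m, this]
      · have hm : m = j + j + 1 := by omega
        have := hodd j
        rw [← hm] at this
        linarith [hST ((S ^ j) x), hdiff m, this]
    have hd_nonneg : ∀ m : ℕ, 0 ≤ d m := by
      intro m
      rcases Nat.even_or_odd m with ⟨j, hj⟩ | ⟨j, hj⟩
      · have hdm : d m = ‖(S ^ j) x‖ ^ 2 := by
          rw [hd]
          simp only [hj, pow_add]
          rw [show ((S ^ j * S ^ j) : H →L[ℂ] H) x = (S ^ j) ((S ^ j) x) from rfl]
          rw [hSpow_symm j, hnorm_sq]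
        rw [hdm]; positivity
      · have hm : m = j + 1 + j := by omega
        have hdm : d m = (⟪S ((S ^ j) x), (S ^ j) x⟫_ℂ).re := by
          rw [hd]
          simp only [hm, pow_add, pow_succ]
          rw [show ((S ^ j * S * S ^ j) : H →L[ℂ] H) x = (S ^ j) (S ((S ^ j) x)) from rfl]
          rw [hSpow_symm j]
        rw [hdm]
        exact hSpos ((S ^ j) x)
    have hAnti : Antitone d := antitone_nat_of_succ_le hd_anti
    have hBdd : BddBelow (Set.range d) := ⟨0, by rintro y ⟨n, rfl⟩; exact hd_nonneg n⟩
    have hL : Tendsto d atTop (nhds (⨅ n, d n)) := tendsto_atTop_ciInf hAnti hBdd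
    have h2n : Tendsto (fun n : ℕ => n + n) atTop atTop :=
      StrictMono.tendsto_atTop (fun a b h => by omega)
    have h2n1 : Tendsto (fun n : ℕ => n + n + 1) atTop atTop :=
      StrictMono.tendsto_atTop (fun a b h => by omega)
    have hA : Tendsto (fun n : ℕ => d (n + n)) atTop (nhds (⨅ n, d n)) := hL.comp h2n
    have hB : Tendsto (fun n : ℕ => d (n + n + 1)) atTop (nhds (⨅ n, d n)) := hL.comp h2n1
    have hC : Tendsto (fun n : ℕ => d (n + n) - d (n + n + 1)) atTop (nhds 0) := by
      have := hA.sub hB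
      simpa using this
    have hb : ∀ n : ℕ, ‖(S ^ n) (T x)‖ ^ 2 ≤ d (n + n) - d (n + n + 1) := by
      intro n
      rw [hdiff (n + n), heven n, hcomm' n]
      exact hTkey ((S ^ n) x)
    have hsq : Tendsto (fun n : ℕ => ‖(S ^ n) (T x)‖ ^ 2) atTop (nhds 0) :=
      squeeze_zero (fun n => sq_nonneg _) hb hC
    have hnorm : Tendsto (fun n : ℕ => ‖(S ^ n) (T x)‖) atTop (nhds 0) := by
      have h1 : Tendsto (fun n : ℕ => Real.sqrt (‖(S ^ n) (T x)‖ ^ 2)) atTop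
          (nhds (Real.sqrt 0)) := (Real.continuous_sqrt.tendsto 0).comp hsq
      simpa [Real.sqrt_sq (norm_nonneg _)] using h1
    exact tendsto_zero_iff_norm_tendsto_zero.mpr hnorm
  -- extend to the closure of the range
  have hclosure : Tendsto (fun n : ℕ => (S ^ n) e) atTop (nhds 0) := by
    rw [NormedAddCommGroup.tendsto_nhds_zero]
    intro ε hε
    have heC : e ∈ closure ((LinearMap.range (T : H →ₗ[ℂ] H) : Submodule ℂ H) : Set H) := he
    rw [Metric.mem_closure_iff] at heC
    obtain ⟨y, hy_mem, hy_dist⟩ := heC (ε / 2) (by linarith)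
    obtain ⟨x, rfl⟩ := hy_mem
    have hx := hrange x
    rw [NormedAddCommGroup.tendsto_nhds_zero] at hx
    filter_upwards [hx (ε / 2) (by linarith)] with n hn
    have h1 : (S ^ n) e = (S ^ n) (e - T x) + (S ^ n) (T x) := by
      rw [← map_add]; congr 1; abel
    have h2 : ‖(S ^ n) e‖ ≤ ‖(S ^ n) (e - T x)‖ + ‖(S ^ n) (T x)‖ := by
      rw [h1]; exact norm_add_le _ _
    have h3 : ‖(S ^ n) (e - T x)‖ ≤ ‖e - T x‖ := hSpow_contr n _
    have h4 : ‖e - T x‖ < ε / 2 := by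
      rw [← dist_eq_norm]; exact hy_dist
    calc ‖(S ^ n) e‖ ≤ ‖(S ^ n) (e - T x)‖ + ‖(S ^ n) (T x)‖ := h2
      _ < ε / 2 + ε / 2 := by
          apply add_lt_add_of_le_of_lt (le_trans h3 (le_of_lt h4)) hn
      _ = ε := by ring
  -- conclude
  have hfinal : Tendsto (fun N : ℕ => e - (S ^ (N + 1)) e) atTop (nhds (e - 0)) :=
    tendsto_const_nhds.sub (hclosure.comp (tendsto_add_atTop_nat 1))
  rw [hPe, sub_zero]
  refine (tendsto_congr telescope).mpr ?_
  simpa using hfinal
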